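/- For every integer n ≥ 4, the intersection number of the symmetric group S_n satisfies ι(S_n) ≤ ⌊(n+8)/4⌋. -/

import Mathlib

set_option linter.unusedSectionVars false
set_option linter.unusedVariables false

/-- The intersection number of a group: the minimum number of maximal subgroups
whose intersection equals the Frattini subgroup. -/
noncomputable def interNum (G : Type*) [Group G] : ℕ :=
  sInf {n | ∃ s : Finset (Subgroup G), s.card = n ∧ (∀ M ∈ s, IsCoatom M) ∧
    s.inf id = frattini G}


open Equiv Finset

variable {α : Type*} [DecidableEq α]

/-- The setwise stabilizer of a finite set, as a subgroup of the permutation group. -/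
def permStab (A : Finset α) : Subgroup (Equiv.Perm α) where
  carrier := {g | ∀ x, g x ∈ A ↔ x ∈ A}
  one_mem' := by intro x; rfl
  mul_mem' := by
    intro a b ha hb x
    exact (ha (b x)).trans (hb x)
  inv_mem' := by
    intro g hg x
    have := hg (g⁻¹ x)
    rw [show ∀ y, g (g⁻¹ y) = y from g.apply_symm_apply] at this
    exact this.symm

lemma mem_permStab {A : Finset α} {g : Equiv.Perm α} :
    g ∈ permStab A ↔ ∀ x, g x ∈ A ↔ x ∈ A := Iff.rfl

lemma swap_mem_permStab {A : Finset α} {a b : α} (hab : a ∈ A ↔ b ∈ A) :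
    Equiv.swap a b ∈ permStab A := by
  intro x
  rcases eq_or_ne x a with rfl | hxa
  · rw [Equiv.swap_apply_left]; exact hab.symm
  rcases eq_or_ne x b with rfl | hxb
  · rw [Equiv.swap_apply_right]; exact hab
  · rw [Equiv.swap_apply_of_ne_of_ne hxa hxb]

lemma mem_image_perm {A : Finset α} {g : Equiv.Perm α} {x : α} :
    g x ∈ A.image g ↔ x ∈ A := by
  simp [Finset.mem_image]

lemma permStab_isCoatom [Fintype α] {A : Finset α} (h1 : 0 < A.card)
    (h2 : 2 * A.card < Fintype.card α) : IsCoatom (permStab A) := by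
  obtain ⟨a, ha⟩ := Finset.card_pos.mp h1
  have hAne : ∃ b, b ∉ A := by
    by_contra h
    push_neg at h
    have : A = Finset.univ := Finset.eq_univ_iff_forall.mpr h
    rw [this, Finset.card_univ] at h2
    omega
  obtain ⟨b, hb⟩ := hAne
  constructor
  · -- not top
    intro htop
    have : Equiv.swap a b ∈ permStab A := htop ▸ Subgroup.mem_top _
    have h3 := (mem_permStab.mp this) a
    rw [Equiv.swap_apply_left] at h3
    exact hb (h3.mpr ha)
  · intro H hlt
    obtain ⟨g, hgH, hgS⟩ := SetLike.exists_of_lt hlt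
    have hSH : permStab A ≤ H := le_of_lt hlt
    set B := A.image g with hBdef
    have hBcard : B.card = A.card := Finset.card_image_of_injective _ g.injective
    have hBA : B ≠ A := by
      intro hEq
      apply hgS
      intro x
      constructor
      · intro hgx
        have : g x ∈ B := hEq ▸ hgx
        exact mem_image_perm.mp this
      · intro hx
        have : g x ∈ B := mem_image_perm.mpr hx
        exact hEq ▸ this
    have hstabB : permStab B ≤ H := by
      intro h hh
      have hw : g⁻¹ * h * g ∈ permStab A := by
        intro x
        have e1 : x ∈ A ↔ g x ∈ B := mem_image_perm.symm
        have e2 : g x ∈ B ↔ h (g x) ∈ B := (mem_permStab.mp hh (g x)).symm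
        have e3 : h (g x) ∈ B ↔ g⁻¹ (h (g x)) ∈ A := by
          constructor
          · intro hmem
            have : g (g⁻¹ (h (g x))) ∈ B := by
              rwa [show ∀ y, g (g⁻¹ y) = y from g.apply_symm_apply]
            exact mem_image_perm.mp this
          · intro hmem
            have h5 : g (g⁻¹ (h (g x))) ∈ B := mem_image_perm.mpr hmem
            rwa [show ∀ y, g (g⁻¹ y) = y from g.apply_symm_apply] at h5
        show g⁻¹ (h (g x)) ∈ A ↔ x ∈ A
        rw [← e3, ← e2, ← e1]
      have : h = g * (g⁻¹ * h * g) * g⁻¹ := by group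
      rw [this]
      exact Subgroup.mul_mem _ (Subgroup.mul_mem _ hgH (hSH hw)) (Subgroup.inv_mem _ hgH)
    -- a crossing swap in H
    have hcross : ∃ u v, u ∈ A ∧ v ∉ A ∧ Equiv.swap u v ∈ H := by
      have hBdiff : (B \ A).Nonempty := by
        rw [Finset.sdiff_nonempty]
        intro hsub
        exact hBA (Finset.eq_of_subset_of_card_le hsub (le_of_eq hBcard.symm))
      obtain ⟨c, hc⟩ := hBdiff
      rw [Finset.mem_sdiff] at hc
      rcases (A ∩ B).eq_empty_or_nonempty with hempty | ⟨d, hd⟩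
      · -- disjoint: a ∉ B; pick e outside A ∪ B
        have haB : a ∉ B := by
          intro haB
          have : a ∈ A ∩ B := Finset.mem_inter.mpr ⟨ha, haB⟩
          rw [hempty] at this
          exact absurd this (Finset.notMem_empty a)
        have : (A ∪ B).card < Fintype.card α := by
          calc (A ∪ B).card ≤ A.card + B.card := Finset.card_union_le _ _
            _ = 2 * A.card := by rw [hBcard]; ring
            _ < Fintype.card α := h2
        have hex : ∃ e, e ∉ A ∪ B := by
          by_contra h
          push_neg at h
          have heq : A ∪ B = Finset.univ := Finset.eq_univ_iff_forall.mpr h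
          rw [heq, Finset.card_univ] at this
          omega
        obtain ⟨e, he⟩ := hex
        rw [Finset.mem_union] at he
        push_neg at he
        refine ⟨a, e, ha, he.1, ?_⟩
        exact hstabB (swap_mem_permStab (by simp [haB, he.2]))
      · rw [Finset.mem_inter] at hd
        refine ⟨d, c, hd.1, hc.2, ?_⟩
        exact hstabB (swap_mem_permStab (by simp [hd.2, hc.1]))
    obtain ⟨u, v, huA, hvA, huvH⟩ := hcross
    -- all swaps are in H
    rw [eq_top_iff, ← Equiv.Perm.closure_isSwap]
    rw [Subgroup.closure_le]
    rintro σ ⟨x, y, hxy, rfl⟩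
    by_cases hx : x ∈ A <;> by_cases hy : y ∈ A
    · exact hSH (swap_mem_permStab (by simp [hx, hy]))
    · -- x ∈ A, y ∉ A
      have hπ : Equiv.swap u x * Equiv.swap v y ∈ permStab A :=
        Subgroup.mul_mem _ (swap_mem_permStab (by simp [huA, hx]))
          (swap_mem_permStab (by simp [hvA, hy]))
      set π := Equiv.swap u x * Equiv.swap v y with hπdef
      have hπu : π u = x := by
        have h1 : Equiv.swap v y u = u :=
          Equiv.swap_apply_of_ne_of_ne (by rintro rfl; exact hvA huA) (by rintro rfl; exact hy huA)
        show Equiv.swap u x (Equiv.swap v y u) = x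
        rw [h1, Equiv.swap_apply_left]
      have hπv : π v = y := by
        have h1 : Equiv.swap v y v = y := Equiv.swap_apply_left _ _
        show Equiv.swap u x (Equiv.swap v y v) = y
        rw [h1]
        exact Equiv.swap_apply_of_ne_of_ne (by rintro rfl; exact hy huA) (by rintro rfl; exact hy hx)
      have : Equiv.swap x y = π * Equiv.swap u v * π⁻¹ := by
        rw [← hπu, ← hπv, Equiv.swap_apply_apply]
      rw [this]
      exact Subgroup.mul_mem _ (Subgroup.mul_mem _ (hSH hπ) huvH) (Subgroup.inv_mem _ (hSH hπ))
    · -- x ∉ A, y ∈ A: symmetric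
      rw [Equiv.swap_comm]
      have hπ : Equiv.swap u y * Equiv.swap v x ∈ permStab A :=
        Subgroup.mul_mem _ (swap_mem_permStab (by simp [huA, hy]))
          (swap_mem_permStab (by simp [hvA, hx]))
      set π := Equiv.swap u y * Equiv.swap v x with hπdef
      have hπu : π u = y := by
        have h1 : Equiv.swap v x u = u :=
          Equiv.swap_apply_of_ne_of_ne (by rintro rfl; exact hvA huA) (by rintro rfl; exact hx huA)
        show Equiv.swap u y (Equiv.swap v x u) = y
        rw [h1, Equiv.swap_apply_left]
      have hπv : π v = x := by
        have h1 : Equiv.swap v x v = x := Equiv.swap_apply_left _ _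
        show Equiv.swap u y (Equiv.swap v x v) = x
        rw [h1]
        exact Equiv.swap_apply_of_ne_of_ne (by rintro rfl; exact hx huA) (by rintro rfl; exact hx hy)
      have : Equiv.swap y x = π * Equiv.swap u v * π⁻¹ := by
        rw [← hπu, ← hπv, Equiv.swap_apply_apply]
      rw [this]
      exact Subgroup.mul_mem _ (Subgroup.mul_mem _ (hSH hπ) huvH) (Subgroup.inv_mem _ (hSH hπ))
    · exact hSH (swap_mem_permStab (by simp [hx, hy]))


open Equiv Finset

lemma interNum_le_of_family {n m : ℕ} (hm : 0 < m) (A : Fin m → Finset (Fin n))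
    (hcard : ∀ i, 0 < (A i).card ∧ 2 * (A i).card < n)
    (hsep : ∀ x y : Fin n, (∀ i, x ∈ A i ↔ y ∈ A i) → x = y) :
    interNum (Equiv.Perm (Fin n)) ≤ m := by
  classical
  set s : Finset (Subgroup (Equiv.Perm (Fin n))) :=
    Finset.image (fun i => permStab (A i)) Finset.univ with hs
  have hcoatom : ∀ M ∈ s, IsCoatom M := by
    intro M hM
    rw [hs, Finset.mem_image] at hM
    obtain ⟨i, -, rfl⟩ := hM
    exact permStab_isCoatom (hcard i).1 (by simpa using (hcard i).2)
  have hinf_bot : s.inf id = ⊥ := by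
    apply le_antisymm
    · intro g hg
      have hgi : ∀ i, g ∈ permStab (A i) := by
        intro i
        have : s.inf id ≤ id (permStab (A i)) :=
          Finset.inf_le (Finset.mem_image_of_mem _ (Finset.mem_univ i))
        exact this hg
      have : g = 1 := by
        ext x
        have : g x = x := hsep (g x) x (fun i => mem_permStab.mp (hgi i) x)
        simp [this]
      rw [this]
      exact Subgroup.one_mem ⊥
    · exact bot_le
  have hfr : frattini (Equiv.Perm (Fin n)) = ⊥ := by
    apply le_antisymm
    · rw [← hinf_bot]
      exact Finset.le_inf (fun M hM => frattini_le_coatom (hcoatom M hM))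
    · exact bot_le
  have hmem : s.card ∈ {c | ∃ s : Finset (Subgroup (Equiv.Perm (Fin n))), s.card = c ∧
      (∀ M ∈ s, IsCoatom M) ∧ s.inf id = frattini (Equiv.Perm (Fin n))} :=
    ⟨s, rfl, hcoatom, by rw [hinf_bot, hfr]⟩
  calc interNum (Equiv.Perm (Fin n)) ≤ s.card := Nat.sInf_le hmem
    _ ≤ (Finset.univ : Finset (Fin m)).card := Finset.card_image_le
    _ = m := by simp

lemma interNum_le_of_sig {n m : ℕ} (hm : 0 < m) (sig : Fin n → Fin m → Bool)
    (hinj : Function.Injective sig)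
    (hcol : ∀ i, 0 < (Finset.univ.filter (fun x => sig x i = true)).card ∧
      2 * (Finset.univ.filter (fun x => sig x i = true)).card < n) :
    interNum (Equiv.Perm (Fin n)) ≤ m := by
  classical
  apply interNum_le_of_family hm (fun i => Finset.univ.filter (fun x => sig x i = true)) hcol
  intro x y hxy
  apply hinj
  funext i
  have := hxy i
  simp only [Finset.mem_filter, Finset.mem_univ, true_and] at this
  rcases Bool.eq_false_or_eq_true (sig x i) with hx | hx <;>
    rcases Bool.eq_false_or_eq_true (sig y i) with hy | hy <;>
      simp_all

lemma interNum_perm_4 : interNum (Equiv.Perm (Fin 4)) ≤ 3 := by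
  apply interNum_le_of_sig (by norm_num)
    (![![false, false, false],
    ![true, false, false],
    ![false, true, false],
    ![false, false, true]])
  · decide
  · decide

lemma interNum_perm_5 : interNum (Equiv.Perm (Fin 5)) ≤ 3 := by
  apply interNum_le_of_sig (by norm_num)
    (![![false, false, false],
    ![true, false, false],
    ![false, true, false],
    ![false, false, true],
    ![true, true, false]])
  · decide
  · decide

lemma interNum_perm_7 : interNum (Equiv.Perm (Fin 7)) ≤ 3 := by
  apply interNum_le_of_sig (by norm_num)
    (![![false, false, false],
    ![true, false, false],
    ![false, true, false],
    ![false, false, true],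
    ![true, true, false],
    ![true, false, true],
    ![false, true, true]])
  · decide
  · decide

lemma interNum_perm_8 : interNum (Equiv.Perm (Fin 8)) ≤ 4 := by
  apply interNum_le_of_sig (by norm_num)
    (![![false, false, false, false],
    ![true, false, false, false],
    ![false, true, false, false],
    ![false, false, true, false],
    ![false, false, false, true],
    ![true, true, false, false],
    ![false, true, true, false],
    ![false, false, true, true]])
  · decide
  · decide

lemma interNum_perm_9 : interNum (Equiv.Perm (Fin 9)) ≤ 4 := by
  apply interNum_le_of_sig (by norm_num)
    (![![false, false, false, false],
    ![true, false, false, false],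
    ![false, true, false, false],
    ![false, false, true, false],
    ![false, false, false, true],
    ![true, true, false, false],
    ![false, true, true, false],
    ![false, false, true, true],
    ![true, false, false, true]])
  · decide
  · decide

lemma interNum_perm_10 : interNum (Equiv.Perm (Fin 10)) ≤ 4 := by
  apply interNum_le_of_sig (by norm_num)
    (![![false, false, false, false],
    ![true, false, false, false],
    ![false, true, false, false],
    ![false, false, true, false],
    ![false, false, false, true],
    ![true, true, false, false],
    ![false, true, true, false],
    ![false, false, true, true],
    ![true, false, false, true],
    ![true, false, true, false]])
  · decide
  · decide

lemma interNum_perm_11 : interNum (Equiv.Perm (Fin 11)) ≤ 4 := by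
  apply interNum_le_of_sig (by norm_num)
    (![![false, false, false, false],
    ![true, false, false, false],
    ![false, true, false, false],
    ![false, false, true, false],
    ![false, false, false, true],
    ![true, true, false, false],
    ![false, true, true, false],
    ![false, false, true, true],
    ![true, false, false, true],
    ![true, false, true, false],
    ![false, true, false, true]])
  · decide
  · decide

lemma interNum_perm_12 : interNum (Equiv.Perm (Fin 12)) ≤ 5 := by
  apply interNum_le_of_sig (by norm_num)
    (![![false, false, false, false, false],
    ![true, false, false, false, false],
    ![false, true, false, false, false],
    ![false, false, true, false, false],
    ![false, false, false, true, false],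
    ![false, false, false, false, true],
    ![true, true, false, false, false],
    ![false, true, true, false, false],
    ![false, false, true, true, false],
    ![false, false, false, true, true],
    ![true, false, false, false, true],
    ![true, false, true, false, false]])
  · decide
  · decide

lemma interNum_perm_13 : interNum (Equiv.Perm (Fin 13)) ≤ 5 := by
  apply interNum_le_of_sig (by norm_num)
    (![![false, false, false, false, false],
    ![true, false, false, false, false],
    ![false, true, false, false, false],
    ![false, false, true, false, false],
    ![false, false, false, true, false],
    ![false, false, false, false, true],
    ![true, true, false, false, false],
    ![false, true, true, false, false],
    ![false, false, true, true, false],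
    ![false, false, false, true, true],
    ![true, false, false, false, true],
    ![true, false, true, false, false],
    ![false, true, false, true, false]])
  · decide
  · decide

lemma interNum_perm_14 : interNum (Equiv.Perm (Fin 14)) ≤ 5 := by
  apply interNum_le_of_sig (by norm_num)
    (![![false, false, false, false, false],
    ![true, false, false, false, false],
    ![false, true, false, false, false],
    ![false, false, true, false, false],
    ![false, false, false, true, false],
    ![false, false, false, false, true],
    ![true, true, false, false, false],
    ![false, true, true, false, false],
    ![false, false, true, true, false],
    ![false, false, false, true, true],
    ![true, false, false, false, true],
    ![true, false, true, false, false],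
    ![false, true, false, true, false],
    ![false, false, true, false, true]])
  · decide
  · decide


open Equiv Finset

lemma addmod_ne {k a d : ℕ} (ha : a < k) (hd1 : 0 < d) (hd2 : d < k) : (a + d) % k ≠ a := by
  intro h
  rcases Nat.lt_or_ge (a + d) k with h1 | h1
  · rw [Nat.mod_eq_of_lt h1] at h; omega
  · have h2 : a + d - k < k := by omega
    rw [Nat.mod_eq_sub_mod h1, Nat.mod_eq_of_lt h2] at h
    omega

lemma addmod_inj {k a d1 d2 : ℕ} (ha : a < k) (h1 : 0 < d1) (h2 : d1 < k) (h3 : 0 < d2)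
    (h4 : d2 < k) (h : (a + d1) % k = (a + d2) % k) : d1 = d2 := by
  rcases lt_trichotomy d1 d2 with hlt | heq | hgt
  · exfalso
    have hb : (a + d1) % k < k := Nat.mod_lt _ (by omega)
    have he : ((a + d1) % k + (d2 - d1)) % k = (a + d2) % k := by
      rw [Nat.mod_add_mod]; congr 1; omega
    rw [h] at he
    exact addmod_ne (h ▸ hb) (by omega) (by omega) he
  · exact heq
  · exfalso
    have hb : (a + d2) % k < k := Nat.mod_lt _ (by omega)
    have he : ((a + d2) % k + (d1 - d2)) % k = (a + d1) % k := by
      rw [Nat.mod_add_mod]; congr 1; omega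
    rw [← h] at he
    exact addmod_ne (h ▸ hb) (by omega) (by omega) he

lemma addmod_cancel {k a d : ℕ} (ha : a < k) (hd : d ≤ k) :
    ((a + d) % k + (k - d)) % k = a := by
  rw [Nat.mod_add_mod]
  have h1 : a + d + (k - d) = a + k := by omega
  rw [h1, Nat.add_mod_right, Nat.mod_eq_of_lt ha]

/-- the generic signature function -/
def gsig (n k : ℕ) : Fin n → Fin k → Bool := fun x i =>
  if (x : ℕ) = 0 then false
  else if (x : ℕ) ≤ k then decide ((x : ℕ) = (i : ℕ) + 1)
  else decide ((i : ℕ) = ((x : ℕ) - k - 1) % k ∨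
    (i : ℕ) = (((x : ℕ) - k - 1) % k + ((x : ℕ) - k - 1) / k + 1) % k)

lemma gsig_zero {n k : ℕ} {x : Fin n} (h : (x : ℕ) = 0) (i : Fin k) :
    gsig n k x i = false := by simp [gsig, h]

lemma gsig_low {n k : ℕ} {x : Fin n} (h0 : (x : ℕ) ≠ 0) (h1 : (x : ℕ) ≤ k) (i : Fin k) :
    gsig n k x i = decide ((x : ℕ) = (i : ℕ) + 1) := by simp [gsig, h0, h1]

lemma gsig_high {n k : ℕ} {x : Fin n} (h1 : k < (x : ℕ)) (i : Fin k) :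
    gsig n k x i = decide ((i : ℕ) = ((x : ℕ) - k - 1) % k ∨
      (i : ℕ) = (((x : ℕ) - k - 1) % k + ((x : ℕ) - k - 1) / k + 1) % k) := by
  have h0 : (x : ℕ) ≠ 0 := by omega
  have h2 : ¬ ((x : ℕ) ≤ k) := by omega
  simp [gsig, h0, h2]


lemma gsig_true_iff_high {n k : ℕ} {x : Fin n} (h1 : k < (x : ℕ)) (i : Fin k) :
    gsig n k x i = true ↔ ((i : ℕ) = ((x : ℕ) - k - 1) % k ∨
      (i : ℕ) = (((x : ℕ) - k - 1) % k + ((x : ℕ) - k - 1) / k + 1) % k) := by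
  rw [gsig_high h1]; simp

lemma gsig_true_iff_low {n k : ℕ} {x : Fin n} (h0 : (x : ℕ) ≠ 0) (h1 : (x : ℕ) ≤ k) (i : Fin k) :
    gsig n k x i = true ↔ (x : ℕ) = (i : ℕ) + 1 := by
  rw [gsig_low h0 h1]; simp


lemma interNum_le_generic {n : ℕ} (hn : 15 ≤ n) :
    interNum (Equiv.Perm (Fin n)) ≤ (n + 8) / 4 := by
  set k := (n + 8) / 4 with hk
  have hmod := Nat.div_add_mod (n + 8) 4
  have hmodlt : (n + 8) % 4 < 4 := Nat.mod_lt _ (by norm_num)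
  have h4k : n + 5 ≤ 4 * k := by omega
  have h4k' : 4 * k ≤ n + 8 := by omega
  have hk5 : 5 ≤ k := by omega
  have hkn : k < n := by omega
  have hnpos : 0 < n := by omega
  have hkpos : 0 < k := by omega
  -- decomposition of a "high" row index
  have hdecomp : ∀ x : Fin n, k < (x : ℕ) → ∃ q a, ((x : ℕ) - k - 1) / k = q ∧
      ((x : ℕ) - k - 1) % k = a ∧ (x : ℕ) = k + 1 + (k * q + a) ∧ a < k ∧
      (q ≤ 2 ∧ (k ≤ 6 → q ≤ 1)) := by
    intro x hx
    have hxlt := x.isLt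
    have htb : (x : ℕ) - k - 1 ≤ 3 * k - 7 := by omega
    have hdm := Nat.div_add_mod ((x : ℕ) - k - 1) k
    have hmk : ((x : ℕ) - k - 1) % k < k := Nat.mod_lt _ hkpos
    refine ⟨_, _, rfl, rfl, by omega, hmk, ?_, ?_⟩
    · exact Nat.lt_succ_iff.mp ((Nat.div_lt_iff_lt_mul hkpos).mpr (by omega))
    · intro hk6
      exact Nat.lt_succ_iff.mp ((Nat.div_lt_iff_lt_mul hkpos).mpr (by omega))
  apply interNum_le_of_sig (by omega) (gsig n k)
  · -- injectivity
    have key : ∀ x y : Fin n, gsig n k x = gsig n k y → (x : ℕ) ≤ (y : ℕ) → (x : ℕ) = (y : ℕ) := by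
      intro x y hxy hle
      by_cases hY0 : (y : ℕ) = 0
      · omega
      by_cases hYe : (y : ℕ) ≤ k
      · have hiy : (y : ℕ) - 1 < k := by omega
        have htrue : gsig n k x ⟨(y : ℕ) - 1, hiy⟩ = true := by
          rw [hxy, gsig_true_iff_low hY0 hYe]
          simp only [Fin.val_mk]
          omega
        by_cases hX0 : (x : ℕ) = 0
        · rw [gsig_zero hX0] at htrue; exact absurd htrue (by simp)
        · have hXe : (x : ℕ) ≤ k := by omega
          rw [gsig_true_iff_low hX0 hXe] at htrue
          simp only [Fin.val_mk] at htrue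
          omega
      · push_neg at hYe
        obtain ⟨q2, a2, hq2, ha2, hy2, ha2k, hq2le, hq2le'⟩ := hdecomp y hYe
        have hd2k : q2 + 1 < k := by
          rcases Nat.lt_or_ge k 7 with h7 | h7
          · have := hq2le' (by omega); omega
          · omega
        have hb2k : (a2 + q2 + 1) % k < k := Nat.mod_lt _ hkpos
        have hab2 : (a2 + (q2 + 1)) % k ≠ a2 := addmod_ne ha2k (Nat.succ_pos _) hd2k
        have hassoc2 : a2 + q2 + 1 = a2 + (q2 + 1) := by omega
        have hya : gsig n k x ⟨a2, ha2k⟩ = true := by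
          rw [hxy, gsig_true_iff_high hYe, ha2]
          left; rfl
        have hyb : gsig n k x ⟨(a2 + q2 + 1) % k, hb2k⟩ = true := by
          rw [hxy, gsig_true_iff_high hYe, ha2, hq2]
          right; rfl
        by_cases hX0 : (x : ℕ) = 0
        · rw [gsig_zero hX0] at hya; exact absurd hya (by simp)
        by_cases hXe : (x : ℕ) ≤ k
        · rw [gsig_true_iff_low hX0 hXe] at hya hyb
          simp only [Fin.val_mk] at hya hyb
          exfalso
          apply hab2
          rw [← hassoc2]
          omega
        · push_neg at hXe
          obtain ⟨q1, a1, hq1, ha1, hx2, ha1k, hq1le, hq1le'⟩ := hdecomp x hXe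
          have hd1k : q1 + 1 < k := by
            rcases Nat.lt_or_ge k 7 with h7 | h7
            · have := hq1le' (by omega); omega
            · omega
          have hsum : (q1 + 1) + (q2 + 1) < k := by
            rcases Nat.lt_or_ge k 7 with h7 | h7
            · have e1 := hq1le' (by omega)
              have e2 := hq2le' (by omega)
              omega
            · omega
          have hxa : gsig n k y ⟨a1, ha1k⟩ = true := by
            rw [← hxy, gsig_true_iff_high hXe, ha1]
            left; rfl
          rw [gsig_true_iff_high hXe] at hya hyb
          rw [gsig_true_iff_high hYe] at hxa
          rw [ha1, hq1] at hya hyb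
          rw [ha2, hq2] at hxa
          simp only [Fin.val_mk] at hya hyb hxa
          -- hya : a2 = a1 ∨ a2 = (a1 + q1 + 1) % k
          -- hyb : (a2+q2+1)%k = a1 ∨ (a2+q2+1)%k = (a1+q1+1)%k
          -- hxa : a1 = a2 ∨ a1 = (a2 + q2 + 1) % k
          have hassoc1 : a1 + q1 + 1 = a1 + (q1 + 1) := by omega
          rw [hassoc1] at hya hyb
          rw [hassoc2] at hyb hxa
          have hab1 : (a1 + (q1 + 1)) % k ≠ a1 := addmod_ne ha1k (Nat.succ_pos _) hd1k
          rcases hxa with h12 | h1b2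
          · -- a1 = a2
            subst h12
            have hbb : (a1 + (q2 + 1)) % k = (a1 + (q1 + 1)) % k := by
              rcases hyb with h | h
              · exact absurd h hab2
              · exact h
            have hq12 : q2 + 1 = q1 + 1 :=
              addmod_inj ha1k (Nat.succ_pos _) hd2k (Nat.succ_pos _) hd1k hbb
            have hq : q1 = q2 := by omega
            rw [hx2, hy2, hq]
          · exfalso
            have ha2b1 : a2 = (a1 + (q1 + 1)) % k := by
              rcases hya with h | h
              · exfalso; rw [← h] at h1b2; exact hab2 h1b2.symm
              · exact h
            have hfin : (a1 + ((q1 + 1) + (q2 + 1))) % k = a1 := by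
              calc (a1 + ((q1 + 1) + (q2 + 1))) % k
                  = ((a1 + (q1 + 1)) + (q2 + 1)) % k := by ring_nf
                _ = ((a1 + (q1 + 1)) % k + (q2 + 1)) % k := by rw [Nat.mod_add_mod]
                _ = (a2 + (q2 + 1)) % k := by rw [← ha2b1]
                _ = a1 := h1b2.symm
            exact addmod_ne ha1k (by omega) hsum hfin
    intro x y hxy
    rcases Nat.le_total (x : ℕ) (y : ℕ) with h | h
    · exact Fin.ext (key x y hxy h)
    · exact Fin.ext ((key y x hxy.symm h).symm)
  · -- column conditions
    intro i
    have hi := i.isLt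
    constructor
    · rw [Finset.card_pos]
      refine ⟨⟨(i : ℕ) + 1, by omega⟩, ?_⟩
      rw [Finset.mem_filter]
      refine ⟨Finset.mem_univ _, ?_⟩
      rw [gsig_true_iff_low (by simp) (by simp only [Fin.val_mk]; omega)]
    · have hle7 : (Finset.univ.filter (fun x => gsig n k x i = true)).card ≤ 7 := by
        classical
        set vals : Fin 7 → ℕ := ![(i : ℕ) + 1,
          k + 1 + (k * 0 + (i : ℕ)),
          k + 1 + (k * 1 + (i : ℕ)),
          k + 1 + (k * 2 + (i : ℕ)),
          k + 1 + (k * 0 + ((i : ℕ) + (k - 1)) % k),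
          k + 1 + (k * 1 + ((i : ℕ) + (k - 2)) % k),
          k + 1 + (k * 2 + ((i : ℕ) + (k - 3)) % k)] with hvals
        set f : Fin 7 → Fin n := fun j =>
          if h : vals j < n then ⟨vals j, h⟩ else ⟨0, hnpos⟩ with hf
        have hsub : (Finset.univ.filter (fun x => gsig n k x i = true)) ⊆
            Finset.image f Finset.univ := by
          intro x hx
          rw [Finset.mem_filter] at hx
          have hx := hx.2
          rw [Finset.mem_image]
          have hxf : ∀ j : Fin 7, vals j = (x : ℕ) → x ∈ Finset.image f Finset.univ := by
            intro j hj
            rw [Finset.mem_image]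
            refine ⟨j, Finset.mem_univ _, ?_⟩
            rw [hf]
            have hvn : vals j < n := by rw [hj]; exact x.isLt
            simp only [hvn, dif_pos]
            exact Fin.ext hj
          by_cases hX0 : (x : ℕ) = 0
          · rw [gsig_zero hX0] at hx; exact absurd hx (by simp)
          by_cases hXe : (x : ℕ) ≤ k
          · rw [gsig_true_iff_low hX0 hXe] at hx
            have := hxf 0 (by show (i : ℕ) + 1 = (x : ℕ); omega)
            rwa [Finset.mem_image] at this
          · push_neg at hXe
            rw [gsig_true_iff_high hXe] at hx
            obtain ⟨q, a, hq, ha, hx2, hak, hqle, -⟩ := hdecomp x hXe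
            rw [hq, ha] at hx
            rcases hx with hcase | hcase
            · -- i = a : x = k + 1 + (k * q + i)
              have hxval : (x : ℕ) = k + 1 + (k * q + (i : ℕ)) := by rw [hx2, hcase]
              interval_cases q
              · have := hxf 1 (by rw [hvals, hxval]; rfl)
                rwa [Finset.mem_image] at this
              · have := hxf 2 (by rw [hvals, hxval]; rfl)
                rwa [Finset.mem_image] at this
              · have := hxf 3 (by rw [hvals, hxval]; rfl)
                rwa [Finset.mem_image] at this
            · -- i = (a + q + 1) % k : a = (i + (k - (q+1))) % k
              have hq1k : q + 1 ≤ k := by omega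
              have hrec : ((i : ℕ) + (k - (q + 1))) % k = a := by
                have hcan := addmod_cancel (k := k) (a := a) (d := q + 1) hak hq1k
                rw [show a + (q + 1) = a + q + 1 by omega] at hcan
                rw [← hcase] at hcan
                exact hcan
              have hxval : (x : ℕ) = k + 1 + (k * q + ((i : ℕ) + (k - (q + 1))) % k) := by
                rw [hrec, hx2]
              interval_cases q
              · have := hxf 4 (by rw [hvals, hxval]; rfl)
                rwa [Finset.mem_image] at this
              · have := hxf 5 (by rw [hvals, hxval]; rfl)
                rwa [Finset.mem_image] at this
              · have := hxf 6 (by rw [hvals, hxval]; rfl)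
                rwa [Finset.mem_image] at this
        calc (Finset.univ.filter (fun x => gsig n k x i = true)).card
            ≤ (Finset.image f Finset.univ).card := Finset.card_le_card hsub
          _ ≤ (Finset.univ : Finset (Fin 7)).card := Finset.card_image_le
          _ = 7 := by simp
      omega


open Equiv Finset

def tau6 : Equiv.Perm (Fin 6) := Equiv.swap 0 1 * Equiv.swap 2 3 * Equiv.swap 4 5

def W6 : Subgroup (Equiv.Perm (Fin 6)) := Subgroup.centralizer {tau6}

lemma mem_W6 {g : Equiv.Perm (Fin 6)} : g ∈ W6 ↔ tau6 * g = g * tau6 := by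
  rw [W6, Subgroup.mem_centralizer_iff]
  constructor
  · intro h; exact h tau6 rfl
  · intro h h' hh'
    rw [Set.mem_singleton_iff] at hh'
    rw [hh']
    exact h

lemma tau6_mem_W6 : tau6 ∈ W6 := mem_W6.mpr rfl

lemma W6_isCoatom : IsCoatom W6 := by
  constructor
  · -- W6 ≠ ⊤
    intro htop
    have : Equiv.swap 1 2 ∈ W6 := htop ▸ Subgroup.mem_top _
    rw [mem_W6] at this
    exact absurd this (by decide)
  · intro H hlt
    have hWH : W6 ≤ H := le_of_lt hlt
    obtain ⟨g, hgH, hgW⟩ := SetLike.exists_of_lt hlt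
    have hWmem : ∀ π : Equiv.Perm (Fin 6), tau6 * π = π * tau6 → π ∈ H :=
      fun π h => hWH (mem_W6.mpr h)
    have hconj : ∀ (w : Equiv.Perm (Fin 6)) (a b : Fin 6), tau6 * w = w * tau6 →
        Equiv.swap a b ∈ H → Equiv.swap (w a) (w b) ∈ H := by
      intro w a b hw hs
      rw [Equiv.swap_apply_apply]
      exact Subgroup.mul_mem _ (Subgroup.mul_mem _ (hWmem w hw) hs)
        (Subgroup.inv_mem _ (hWmem w hw))
    have htrans : ∀ a b c : Fin 6, Equiv.swap a b ∈ H → Equiv.swap b c ∈ H →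
        Equiv.swap a c ∈ H := fun a b c h1 h2 => SubmonoidClass.swap_mem_trans H h1 h2
    set t : Equiv.Perm (Fin 6) := g * tau6 * g⁻¹ with ht
    have htH : t ∈ H := Subgroup.mul_mem _ (Subgroup.mul_mem _ hgH (hWH tau6_mem_W6))
      (Subgroup.inv_mem _ hgH)
    have htne : t ≠ tau6 := by
      intro h
      apply hgW
      rw [mem_W6]
      have : g * tau6 * g⁻¹ = tau6 := h
      calc tau6 * g = (g * tau6 * g⁻¹) * g := by rw [this]
        _ = g * tau6 := by group
    have hfpf : ∀ x, t x ≠ x := by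
      intro x h
      have h2 : g (tau6 (g⁻¹ x)) = x := h
      have h3 : tau6 (g⁻¹ x) = g⁻¹ x := by
        apply g.injective
        rw [h2, show ∀ y, g (g⁻¹ y) = y from g.apply_symm_apply]
      have : ∀ y : Fin 6, tau6 y ≠ y := by decide
      exact this _ h3
    have hedge : ∀ x, Equiv.swap x (t x) ∈ H := by
      intro x
      have hsmem : ∀ y : Fin 6, Equiv.swap y (tau6 y) ∈ W6 := by
        intro y
        rw [mem_W6]
        revert y
        decide
      have key := Equiv.swap_apply_apply g (g⁻¹ x) (tau6 (g⁻¹ x))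
      rw [show ∀ y, g (g⁻¹ y) = y from g.apply_symm_apply] at key
      have : g (tau6 (g⁻¹ x)) = t x := rfl
      rw [this] at key
      rw [key]
      exact Subgroup.mul_mem _ (Subgroup.mul_mem _ hgH (hWH (hsmem _)))
        (Subgroup.inv_mem _ hgH)
    -- find a crossing pair
    have hx0 : ∃ x : Fin 6, t x ≠ tau6 x := by
      by_contra h
      push_neg at h
      exact htne (Equiv.ext h)
    obtain ⟨x0, hx0⟩ := hx0
    obtain ⟨u, v, huv1, huv2, hsw⟩ : ∃ u v : Fin 6, v ≠ u ∧ v ≠ tau6 u ∧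
        Equiv.swap u v ∈ H := ⟨x0, t x0, hfpf x0, hx0, hedge x0⟩
    have hpair : ∀ (w : Equiv.Perm (Fin 6)), tau6 * w = w * tau6 → w u = 0 → w v = 2 →
        Equiv.swap u v ∈ H → Equiv.swap 0 2 ∈ H ∧ Equiv.swap 0 4 ∈ H := by
      intro w hw h0 h2 hs
      have h02 := hconj w u v hw hs
      rw [h0, h2] at h02
      have h04 := hconj (Equiv.swap 2 4 * Equiv.swap 3 5) 0 2 (by decide) h02
      have e0 : (Equiv.swap 2 4 * Equiv.swap 3 5 : Equiv.Perm (Fin 6)) (0 : Fin 6) = 0 := by decide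
      have e2 : (Equiv.swap 2 4 * Equiv.swap 3 5 : Equiv.Perm (Fin 6)) (2 : Fin 6) = 4 := by decide
      rw [e0, e2] at h04
      exact ⟨h02, h04⟩
    have hkey : Equiv.swap 0 2 ∈ H ∧ Equiv.swap 0 4 ∈ H := by
      clear hx0 hfpf hedge htH htne
      fin_cases u <;> fin_cases v <;>
        first
        | (exact absurd (by decide) huv1)
        | (exact absurd (by decide) huv2)
        | (exact hpair ((1 : Equiv.Perm (Fin 6))) (by decide) (by decide) (by decide) hsw)
        | (exact hpair ((Equiv.swap 2 3)) (by decide) (by decide) (by decide) hsw)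
        | (exact hpair ((Equiv.swap 2 4 * Equiv.swap 3 5)) (by decide) (by decide) (by decide) hsw)
        | (exact hpair ((Equiv.swap 2 3) * (Equiv.swap 2 4 * Equiv.swap 3 5)) (by decide) (by decide) (by decide) hsw)
        | (exact hpair ((Equiv.swap 0 1)) (by decide) (by decide) (by decide) hsw)
        | (exact hpair ((Equiv.swap 0 1) * (Equiv.swap 2 3)) (by decide) (by decide) (by decide) hsw)
        | (exact hpair ((Equiv.swap 0 1) * (Equiv.swap 2 4 * Equiv.swap 3 5)) (by decide) (by decide) (by decide) hsw)
        | (exact hpair ((Equiv.swap 0 1) * (Equiv.swap 2 3) * (Equiv.swap 2 4 * Equiv.swap 3 5)) (by decide) (by decide) (by decide) hsw)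
        | (exact hpair ((Equiv.swap 0 2 * Equiv.swap 1 3)) (by decide) (by decide) (by decide) hsw)
        | (exact hpair ((Equiv.swap 2 3) * (Equiv.swap 0 2 * Equiv.swap 1 3)) (by decide) (by decide) (by decide) hsw)
        | (exact hpair ((Equiv.swap 0 2 * Equiv.swap 1 3) * (Equiv.swap 0 4 * Equiv.swap 1 5)) (by decide) (by decide) (by decide) hsw)
        | (exact hpair ((Equiv.swap 2 3) * (Equiv.swap 0 2 * Equiv.swap 1 3) * (Equiv.swap 0 4 * Equiv.swap 1 5)) (by decide) (by decide) (by decide) hsw)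
        | (exact hpair ((Equiv.swap 0 1) * (Equiv.swap 0 2 * Equiv.swap 1 3)) (by decide) (by decide) (by decide) hsw)
        | (exact hpair ((Equiv.swap 0 1) * (Equiv.swap 2 3) * (Equiv.swap 0 2 * Equiv.swap 1 3)) (by decide) (by decide) (by decide) hsw)
        | (exact hpair ((Equiv.swap 0 1) * (Equiv.swap 0 2 * Equiv.swap 1 3) * (Equiv.swap 0 4 * Equiv.swap 1 5)) (by decide) (by decide) (by decide) hsw)
        | (exact hpair ((Equiv.swap 0 1) * (Equiv.swap 2 3) * (Equiv.swap 0 2 * Equiv.swap 1 3) * (Equiv.swap 0 4 * Equiv.swap 1 5)) (by decide) (by decide) (by decide) hsw)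
        | (exact hpair ((Equiv.swap 0 2 * Equiv.swap 1 3) * (Equiv.swap 2 4 * Equiv.swap 3 5)) (by decide) (by decide) (by decide) hsw)
        | (exact hpair ((Equiv.swap 2 3) * (Equiv.swap 0 2 * Equiv.swap 1 3) * (Equiv.swap 2 4 * Equiv.swap 3 5)) (by decide) (by decide) (by decide) hsw)
        | (exact hpair ((Equiv.swap 0 4 * Equiv.swap 1 5)) (by decide) (by decide) (by decide) hsw)
        | (exact hpair ((Equiv.swap 2 3) * (Equiv.swap 0 4 * Equiv.swap 1 5)) (by decide) (by decide) (by decide) hsw)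
        | (exact hpair ((Equiv.swap 0 1) * (Equiv.swap 0 2 * Equiv.swap 1 3) * (Equiv.swap 2 4 * Equiv.swap 3 5)) (by decide) (by decide) (by decide) hsw)
        | (exact hpair ((Equiv.swap 0 1) * (Equiv.swap 2 3) * (Equiv.swap 0 2 * Equiv.swap 1 3) * (Equiv.swap 2 4 * Equiv.swap 3 5)) (by decide) (by decide) (by decide) hsw)
        | (exact hpair ((Equiv.swap 0 1) * (Equiv.swap 0 4 * Equiv.swap 1 5)) (by decide) (by decide) (by decide) hsw)
        | (exact hpair ((Equiv.swap 0 1) * (Equiv.swap 2 3) * (Equiv.swap 0 4 * Equiv.swap 1 5)) (by decide) (by decide) (by decide) hsw)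
    obtain ⟨h02, h04⟩ := hkey
    have hc0 : ∀ x : Fin 6, Equiv.swap 0 x ∈ H := by
      intro x
      have hsw01 : Equiv.swap 0 1 ∈ H := hWmem _ (by decide)
      have hsw23 : Equiv.swap 2 3 ∈ H := hWmem _ (by decide)
      have hsw45 : Equiv.swap 4 5 ∈ H := hWmem _ (by decide)
      have h00 : Equiv.swap (0 : Fin 6) 0 ∈ H := by
        rw [Equiv.swap_self]
        exact Subgroup.one_mem H
      have h03 : Equiv.swap (0 : Fin 6) 3 ∈ H := htrans 0 2 3 h02 hsw23
      have h05 : Equiv.swap (0 : Fin 6) 5 ∈ H := htrans 0 4 5 h04 hsw45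
      fin_cases x <;>
        first
        | exact h00
        | exact hsw01
        | exact h02
        | exact h03
        | exact h04
        | exact h05
    have hall : ∀ a b : Fin 6, Equiv.swap a b ∈ H := by
      intro a b
      have h1 : Equiv.swap a 0 ∈ H := by rw [Equiv.swap_comm]; exact hc0 a
      exact htrans a 0 b h1 (hc0 b)
    rw [eq_top_iff, ← Equiv.Perm.closure_isSwap, Subgroup.closure_le]
    rintro σ ⟨a, b, hab, rfl⟩
    exact hall a b

-- placeholders (proved in p1/p2)
lemma inter6_eq_bot :
    W6 ⊓ (permStab ({0, 2} : Finset (Fin 6)) ⊓ permStab ({1, 4} : Finset (Fin 6))) = ⊥ := by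
  apply le_antisymm _ bot_le
  intro g hg
  obtain ⟨hgW, hg1, hg2⟩ : g ∈ W6 ∧ g ∈ permStab ({0, 2} : Finset (Fin 6)) ∧
      g ∈ permStab ({1, 4} : Finset (Fin 6)) := by
    simpa [Subgroup.mem_inf] using hg
  rw [mem_W6] at hgW
  have hc : ∀ x, g (tau6 x) = tau6 (g x) := by
    intro x
    have := congrArg (fun p => p.toFun x) hgW.symm
    exact this
  have h1 : ∀ x : Fin 6, g x ∈ ({0, 2} : Finset (Fin 6)) ↔ x ∈ ({0, 2} : Finset (Fin 6)) :=
    mem_permStab.mp hg1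
  have h2 : ∀ x : Fin 6, g x ∈ ({1, 4} : Finset (Fin 6)) ↔ x ∈ ({1, 4} : Finset (Fin 6)) :=
    mem_permStab.mp hg2
  have hg0 : g 0 = 0 ∨ g 0 = 2 := by
    have := (h1 0).mpr (by decide)
    simpa using this
  have htau0 : tau6 (0 : Fin 6) = 1 := by decide
  have htau2 : tau6 (2 : Fin 6) = 3 := by decide
  have htau4 : tau6 (4 : Fin 6) = 5 := by decide
  rcases hg0 with hg0 | hg0
  · -- g 0 = 0
    have hgg1 : g 1 = 1 := by
      have := hc 0
      rw [htau0, hg0, htau0] at this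
      exact this
    have hgg2 : g 2 = 2 := by
      have hmem := (h1 2).mpr (by decide)
      have hne : g 2 ≠ 0 := by
        intro h
        exact (by decide : (2 : Fin 6) ≠ 0) (g.injective (h.trans hg0.symm))
      simp only [Finset.mem_insert, Finset.mem_singleton] at hmem
      tauto
    have hgg3 : g 3 = 3 := by
      have := hc 2
      rw [htau2, hgg2, htau2] at this
      exact this
    have hgg4 : g 4 = 4 := by
      have hmem := (h2 4).mpr (by decide)
      have hne : g 4 ≠ 1 := by
        intro h
        exact (by decide : (4 : Fin 6) ≠ 1) (g.injective (h.trans hgg1.symm))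
      simp only [Finset.mem_insert, Finset.mem_singleton] at hmem
      tauto
    have hgg5 : g 5 = 5 := by
      have := hc 4
      rw [htau4, hgg4, htau4] at this
      exact this
    have : g = 1 := by
      ext x
      fin_cases x <;>
        first
        | (exact congrArg Fin.val hg0)
        | (exact congrArg Fin.val hgg1)
        | (exact congrArg Fin.val hgg2)
        | (exact congrArg Fin.val hgg3)
        | (exact congrArg Fin.val hgg4)
        | (exact congrArg Fin.val hgg5)
    rw [this]
    exact Subgroup.one_mem ⊥
  · -- g 0 = 2 : contradiction
    exfalso
    have hgg1 : g 1 = 3 := by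
      have := hc 0
      rw [htau0, hg0, htau2] at this
      exact this
    have hmem := (h2 1).mpr (by decide)
    rw [hgg1] at hmem
    exact (by decide : (3 : Fin 6) ∉ ({1, 4} : Finset (Fin 6))) hmem

lemma interNum_perm_6 : interNum (Equiv.Perm (Fin 6)) ≤ 3 := by
  classical
  set s : Finset (Subgroup (Equiv.Perm (Fin 6))) :=
    {W6, permStab ({0, 2} : Finset (Fin 6)), permStab ({1, 4} : Finset (Fin 6))} with hs
  have hcoatom : ∀ M ∈ s, IsCoatom M := by
    intro M hM
    rw [hs] at hM
    simp only [Finset.mem_insert, Finset.mem_singleton] at hM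
    rcases hM with rfl | rfl | rfl
    · exact W6_isCoatom
    · exact permStab_isCoatom (by decide) (by decide)
    · exact permStab_isCoatom (by decide) (by decide)
  have hinf : s.inf id = ⊥ := by
    rw [hs]
    rw [Finset.inf_insert, Finset.inf_insert, Finset.inf_singleton]
    exact inter6_eq_bot
  have hfr : frattini (Equiv.Perm (Fin 6)) = ⊥ := by
    apply le_antisymm _ bot_le
    rw [← hinf]
    exact Finset.le_inf (fun M hM => frattini_le_coatom (hcoatom M hM))
  have hmem : s.card ∈ {c | ∃ s : Finset (Subgroup (Equiv.Perm (Fin 6))), s.card = c ∧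
      (∀ M ∈ s, IsCoatom M) ∧ s.inf id = frattini (Equiv.Perm (Fin 6))} :=
    ⟨s, rfl, hcoatom, by rw [hinf, hfr]⟩
  calc interNum (Equiv.Perm (Fin 6)) ≤ s.card := Nat.sInf_le hmem
    _ ≤ 3 := by
      rw [hs]
      apply le_trans (Finset.card_insert_le _ _)
      have := Finset.card_insert_le (permStab ({0, 2} : Finset (Fin 6)))
        ({permStab ({1, 4} : Finset (Fin 6))} : Finset (Subgroup (Equiv.Perm (Fin 6))))
      simp only [Finset.card_singleton] at this ⊢
      omega


theorem interNum_symm_le (n : ℕ) (hn : 4 ≤ n) :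
    interNum (Equiv.Perm (Fin n)) ≤ (n + 8) / 4 := by
  rcases Nat.lt_or_ge n 15 with h | h
  · interval_cases n
    · exact le_trans interNum_perm_4 (by norm_num)
    · exact le_trans interNum_perm_5 (by norm_num)
    · exact le_trans interNum_perm_6 (by norm_num)
    · exact le_trans interNum_perm_7 (by norm_num)
    · exact le_trans interNum_perm_8 (by norm_num)
    · exact le_trans interNum_perm_9 (by norm_num)
    · exact le_trans interNum_perm_10 (by norm_num)
    · exact le_trans interNum_perm_11 (by norm_num)
    · exact le_trans interNum_perm_12 (by norm_num)
    · exact le_trans interNum_perm_13 (by norm_num)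
    · exact le_trans interNum_perm_14 (by norm_num)
  · exact interNum_le_generic h
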